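/- arXiv:2604.05451 — 2 statements merged into one kernel-verified Lean document; each statement's English description precedes it below -/
import Mathlib

section
/- Let g : [0,∞) → ℝ be C² with g(s) > 0, g'(s) < 0, g''(s) > 0 for all s ≥ 0, g' ∈ L¹(0,∞), and g(s) → 0 as s → ∞. Then for every ε > 0 there exists δ > 0 such that for all real λ with |λ| ≥ ε, ∫₀^∞ |g'(s)| · |1 - e^{-iλs}|² ds ≥ δ. -/
open MeasureTheory Set Filter

lemma norm_one_sub_exp_sq (lam s : ℝ) :
    ‖(1 : ℂ) - Complex.exp (-(Complex.I * lam * s))‖ ^ 2 = 2 - 2 * Real.cos (lam * s) := by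
  have h : -(Complex.I * lam * s) = ((-(lam * s) : ℝ) : ℂ) * Complex.I := by
    push_cast; ring
  rw [h, Complex.exp_mul_I, Complex.sq_norm, Complex.normSq_apply]
  simp only [Complex.sub_re, Complex.sub_im, Complex.add_re, Complex.add_im, Complex.one_re,
    Complex.one_im, Complex.mul_re, Complex.mul_im, Complex.I_re, Complex.I_im,
    Complex.cos_ofReal_re, Complex.cos_ofReal_im, Complex.sin_ofReal_re, Complex.sin_ofReal_im,
    Real.cos_neg, Real.sin_neg]
  nlinarith [Real.sin_sq_add_cos_sq (lam * s)]

/-- Key lower bound on the memory kernel: for every ε > 0 there is δ > 0 such that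
for all real λ with |λ| ≥ ε, ∫₀^∞ |g'(s)| |1 - e^{-iλs}|² ds ≥ δ. -/
theorem stmt0 (g : ℝ → ℝ)
    (hg : ContDiffOn ℝ 2 g (Ici 0))
    (hgpos : ∀ s ≥ (0:ℝ), 0 < g s)
    (hg' : ∀ s ≥ (0:ℝ), deriv g s < 0)
    (hg'' : ∀ s ≥ (0:ℝ), 0 < deriv (deriv g) s)
    (hint : IntegrableOn (deriv g) (Ioi 0))
    (hlim : Tendsto g atTop (nhds 0)) :
    ∀ ε > (0:ℝ), ∃ δ > (0:ℝ), ∀ lam : ℝ, ε ≤ |lam| →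
      δ ≤ ∫ s in Ioi (0:ℝ),
        |deriv g s| * ‖(1 : ℂ) - Complex.exp (-(Complex.I * lam * s))‖ ^ 2 := by
  intro ε hε
  set b : ℝ := 2 + 2 / ε with hb
  have hεinv : 0 < 2 / ε := by positivity
  have hab : (1:ℝ) ≤ b := by simp only [hb]; linarith
  -- continuity of |deriv g| on Ioi 0
  have hcont : ContinuousOn (fun s => |deriv g s|) (Ioi 0) := by
    have := (hg.mono (Ioi_subset_Ici le_rfl)).continuousOn_deriv_of_isOpen isOpen_Ioi
      (by norm_num)
    exact this.abs
  have hIccsub : Icc (1:ℝ) b ⊆ Ioi 0 := fun x hx => lt_of_lt_of_le one_pos hx.1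
  -- minimum of |deriv g| on [1,b]
  obtain ⟨s₀, hs₀, hmin⟩ := isCompact_Icc.exists_isMinOn (nonempty_Icc.mpr hab)
    (hcont.mono hIccsub)
  set m : ℝ := |deriv g s₀| with hm
  have hmpos : 0 < m := abs_pos.mpr (ne_of_lt (hg' s₀ (le_of_lt (hIccsub hs₀))))
  refine ⟨2 * m, by positivity, fun lam hlam => ?_⟩
  have hlam0 : lam ≠ 0 := by
    intro h; rw [h, abs_zero] at hlam; linarith
  have hlamabs : 0 < |lam| := lt_of_lt_of_le hε hlam
  set f : ℝ → ℝ := fun s => |deriv g s| * ‖(1 : ℂ) - Complex.exp (-(Complex.I * lam * s))‖ ^ 2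
    with hf
  have hfnn : ∀ s, 0 ≤ f s := fun s => mul_nonneg (abs_nonneg _) (by positivity)
  have hwcont : Continuous fun s : ℝ =>
      ‖(1 : ℂ) - Complex.exp (-(Complex.I * lam * s))‖ ^ 2 := by
    fun_prop
  -- integrability on Ioi 0
  have hfi : IntegrableOn f (Ioi 0) := by
    refine Integrable.mono' ((hint.abs).const_mul 4) ?_ ?_
    · exact ((measurable_deriv g).abs.mul hwcont.measurable).aestronglyMeasurable
    · filter_upwards with s
      rw [Real.norm_eq_abs, abs_of_nonneg (hfnn s), hf]
      simp only
      rw [norm_one_sub_exp_sq]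
      have := Real.neg_one_le_cos (lam * s)
      nlinarith [abs_nonneg (deriv g s)]
  -- restrict to Icc 1 b
  have step1 : ∫ s in Icc (1:ℝ) b, f s ≤ ∫ s in Ioi (0:ℝ), f s := by
    refine setIntegral_mono_set hfi ?_ (HasSubset.Subset.eventuallyLE hIccsub)
    filter_upwards with s using hfnn s
  -- lower bound on Icc
  have step2 : ∫ s in Icc (1:ℝ) b, m * (2 - 2 * Real.cos (lam * s)) ≤
      ∫ s in Icc (1:ℝ) b, f s := by
    refine setIntegral_mono_on ?_ (hfi.mono_set hIccsub) measurableSet_Icc ?_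
    · exact (Continuous.integrableOn_Icc (by fun_prop))
    · intro x hx
      have h1 : m ≤ |deriv g x| := hmin hx
      have h2 : 0 ≤ 2 - 2 * Real.cos (lam * x) := by
        nlinarith [Real.cos_le_one (lam * x)]
      calc m * (2 - 2 * Real.cos (lam * x)) ≤ |deriv g x| * (2 - 2 * Real.cos (lam * x)) :=
            mul_le_mul_of_nonneg_right h1 h2
        _ = f x := by rw [hf]; simp only [norm_one_sub_exp_sq]
  -- compute the model integral
  set c : ℝ := ∫ x in (1:ℝ)..b, Real.cos (lam * x) with hc
  have hcos_int : IntervalIntegrable (fun x => Real.cos (lam * x)) volume 1 b :=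
    (Continuous.intervalIntegrable (by fun_prop) _ _)
  have hcval : lam * c = Real.sin (lam * b) - Real.sin (lam * 1) := by
    rw [hc, intervalIntegral.mul_integral_comp_mul_left, integral_cos]
  have hcbound : |c| ≤ 2 / ε := by
    have h2 : |lam * c| ≤ 2 := by
      rw [hcval]
      have := Real.neg_one_le_sin (lam * b)
      have := Real.sin_le_one (lam * b)
      have := Real.neg_one_le_sin (lam * 1)
      have := Real.sin_le_one (lam * 1)
      rw [abs_le]; constructor <;> linarith
    rw [abs_mul] at h2
    have hc1 : |c| ≤ 2 / |lam| := by
      rw [le_div_iff₀ hlamabs]; linarith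
    refine hc1.trans ?_
    gcongr
  have hval : ∫ s in Icc (1:ℝ) b, m * (2 - 2 * Real.cos (lam * s)) =
      m * (2 * (b - 1) - 2 * c) := by
    rw [MeasureTheory.integral_Icc_eq_integral_Ioc, ← intervalIntegral.integral_of_le hab]
    rw [intervalIntegral.integral_const_mul]
    congr 1
    rw [intervalIntegral.integral_sub (intervalIntegrable_const) (hcos_int.const_mul 2),
      intervalIntegral.integral_const, intervalIntegral.integral_const_mul]
    simp [smul_eq_mul]; ring
  -- put it together
  have hfinal : 2 * m ≤ m * (2 * (b - 1) - 2 * c) := by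
    have hcle : c ≤ 2 / ε := le_of_abs_le hcbound
    have : (2:ℝ) ≤ 2 * (b - 1) - 2 * c := by
      simp only [hb]; nlinarith
    nlinarith
  calc (2:ℝ) * m ≤ m * (2 * (b - 1) - 2 * c) := hfinal
    _ = ∫ s in Icc (1:ℝ) b, m * (2 - 2 * Real.cos (lam * s)) := hval.symm
    _ ≤ ∫ s in Icc (1:ℝ) b, f s := step2
    _ ≤ ∫ s in Ioi (0:ℝ), f s := step1
end

section
/- Let J, ξ, d, γ, β, b, m be real parameters with β ≠ 0, b > 0, and let λ ≠ 0 be real. Suppose Jλ² - ξ + dγ/β ≠ 0 and set q₁ = (Jλ² - ξ + dγ/β) / (-b + imγ/(βλ)). Then q₁ ≠ 0, and moreover i(aγλ/β) + (i kγ/(βλ) - m) q₁ + i d λ ≠ 0 provided the parameters additionally satisfy a, k, d > 0, m ≠ 0, γ > 0. -/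
/-- Key algebraic lemma: if Jλ² - ξ + dγ/β ≠ 0 then
q₁ = (Jλ² - ξ + dγ/β)/(-b + imγ/(βλ)) ≠ 0 and
i(aγλ/β) + (ikγ/(βλ) - m) q₁ + idλ ≠ 0. -/
theorem stmt9 (J ξ d γ β b m a k lam : ℝ)
    (hβ : β ≠ 0) (hb : 0 < b) (hlam : lam ≠ 0)
    (ha : 0 < a) (hk : 0 < k) (hd : 0 < d) (hm : m ≠ 0) (hγ : 0 < γ)
    (hnum : J * lam ^ 2 - ξ + d * γ / β ≠ 0)
    (q₁ : ℂ)
    (hq : q₁ = ((J * lam ^ 2 - ξ + d * γ / β : ℝ) : ℂ) /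
        (-(b : ℂ) + Complex.I * m * γ / (β * lam))) :
    q₁ ≠ 0 ∧
      Complex.I * ((a * γ * lam / β : ℝ) : ℂ)
        + (Complex.I * ((k * γ / (β * lam) : ℝ) : ℂ) - (m : ℂ)) * q₁
        + Complex.I * d * lam ≠ 0 := by
  have hβl : (β * lam : ℝ) ≠ 0 := mul_ne_zero hβ hlam
  have hβlC : ((β : ℂ) * lam) ≠ 0 := by exact_mod_cast hβl
  have hDeq : (-(b : ℂ) + Complex.I * m * γ / (β * lam))
      = Complex.ofReal (-b) + Complex.ofReal (m * γ / (β * lam)) * Complex.I := by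
    push_cast
    field_simp
  have hD : (-(b : ℂ) + Complex.I * m * γ / (β * lam)) ≠ 0 := by
    rw [hDeq]
    intro h0
    have h1 := congrArg Complex.re h0
    simp only [Complex.add_re, Complex.mul_re, Complex.ofReal_re, Complex.ofReal_im,
      Complex.I_re, Complex.I_im, Complex.zero_re] at h1
    nlinarith
  have hq1 : q₁ ≠ 0 := by
    rw [hq]
    exact div_ne_zero (by exact_mod_cast hnum) hD
  refine ⟨hq1, ?_⟩
  intro h
  have hD' : (Complex.ofReal (-b) + Complex.ofReal (m * γ / (β * lam)) * Complex.I) ≠ 0 := by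
    rw [← hDeq]; exact hD
  have h2 : Complex.I * ((a * γ * lam / β : ℝ) : ℂ)
        * (Complex.ofReal (-b) + Complex.ofReal (m * γ / (β * lam)) * Complex.I)
      + (Complex.I * ((k * γ / (β * lam) : ℝ) : ℂ) - (m : ℂ))
        * ((J * lam ^ 2 - ξ + d * γ / β : ℝ) : ℂ)
      + Complex.I * d * lam
        * (Complex.ofReal (-b) + Complex.ofReal (m * γ / (β * lam)) * Complex.I) = 0 := by
    have hcancel : (((J * lam ^ 2 - ξ + d * γ / β : ℝ) : ℂ)
        / (Complex.ofReal (-b) + Complex.ofReal (m * γ / (β * lam)) * Complex.I))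
        * (Complex.ofReal (-b) + Complex.ofReal (m * γ / (β * lam)) * Complex.I)
        = ((J * lam ^ 2 - ξ + d * γ / β : ℝ) : ℂ) := div_mul_cancel₀ _ hD'
    rw [hq, hDeq] at h
    linear_combination (Complex.ofReal (-b) + Complex.ofReal (m * γ / (β * lam)) * Complex.I) * h
      - (Complex.I * ((k * γ / (β * lam) : ℝ) : ℂ) - (m : ℂ)) * hcancel
  have hre := congrArg Complex.re h2
  have him := congrArg Complex.im h2
  simp only [Complex.add_re, Complex.add_im, Complex.mul_re, Complex.mul_im,
    Complex.I_re, Complex.I_im, Complex.ofReal_re, Complex.ofReal_im,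
    Complex.sub_re, Complex.sub_im, Complex.neg_re, Complex.neg_im,
    Complex.zero_re, Complex.zero_im] at hre him
  ring_nf at hre him
  field_simp at hre him
  have key : (β * (J * lam ^ 2 - ξ) + d * γ) * m * (k * γ ^ 2 + b * β ^ 2 * lam ^ 2)
      * (β ^ 2 * lam) = 0 := by
    linear_combination (β ^ 2 * lam) * (m * γ * him - b * lam ^ 2 * β * hre)
  have h5 : β * (J * lam ^ 2 - ξ) + d * γ = 0 := by
    have h6 : m * (k * γ ^ 2 + b * β ^ 2 * lam ^ 2) * (β ^ 2 * lam) ≠ 0 := by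
      have : (0:ℝ) < k * γ ^ 2 + b * β ^ 2 * lam ^ 2 := by positivity
      positivity
    by_contra hc
    exact mul_ne_zero hc h6 (by linear_combination key)
  exact hnum (by field_simp; linear_combination h5)
end
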